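/- Let H ⊆ V(T_n) and let S(H) be the set of signatures (sets of levels occupied by the images) of all regular embeddings of T_d into H over all d ≥ 0, including the empty signature. Then |S(H)| ≥ 2^(w(H)). -/

import Mathlib

/-- Vertex set of the full binary tree `T_n` of depth `n-1`:
binary strings of length `< n`; the level of a vertex is its length. -/
def treeVerts (n : ℕ) : Set (List Bool) := {x | x.length < n}

/-- Weight of a set of vertices: `w(H) = Σ_{x ∈ H} 2^(-level x)`. -/
noncomputable def weight (H : Set (List Bool)) : ℝ :=
  ∑' x : H, (2 : ℝ) ^ (-((x : List Bool).length : ℤ))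

/-- `f` is a regular embedding of `T_d`: vertices at equal levels map to equal
levels, and the two children of each vertex map to descendants of distinct
children of the image (descendant = extension of the string). -/
def IsRegEmb (d : ℕ) (f : List Bool → List Bool) : Prop :=
  (∀ x y : List Bool, x.length < d → y.length < d → x.length = y.length →
      (f x).length = (f y).length) ∧
  (∀ x : List Bool, x.length + 1 < d → ∃ c : Bool,
      (f x ++ [c]) <+: f (x ++ [false]) ∧ (f x ++ [!c]) <+: f (x ++ [true]))

/-- `S(H)`: the set of signatures (sets of occupied levels) of all regular
embeddings of some `T_d`, `d ≥ 0`, into `H`. -/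
def sigs (H : Set (List Bool)) : Set (Set ℕ) :=
  {σ | ∃ (d : ℕ) (f : List Bool → List Bool), IsRegEmb d f ∧
      (∀ x : List Bool, x.length < d → f x ∈ H) ∧
      σ = {l : ℕ | ∃ x : List Bool, x.length < d ∧ (f x).length = l}}

namespace Stmt3Aux


lemma weight_union {S T : Set (List Bool)} (hS : S.Finite) (hT : T.Finite)
    (h : Disjoint S T) : weight (S ∪ T) = weight S + weight T := by
  unfold weight
  exact Summable.tsum_union_disjoint (f := fun y : List Bool => (2:ℝ) ^ (-(y.length : ℤ))) h
    (hS.summable _) (hT.summable _)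

lemma weight_cons (b : Bool) (S : Set (List Bool)) :
    weight ((b :: ·) '' S) = weight S / 2 := by
  have h1 := tsum_image (g := (b :: ·)) (fun y : List Bool => (2:ℝ) ^ (-(y.length : ℤ)))
    (s := S) (fun x _ y _ h => by simpa using h)
  unfold weight
  rw [h1]
  have : ∀ x : S, (2:ℝ) ^ (-(((b :: (x:List Bool)).length : ℤ))) =
      (2:ℝ) ^ (-((x:List Bool).length : ℤ)) * (2:ℝ)⁻¹ := by
    intro x
    rw [List.length_cons]
    push_cast
    rw [neg_add, zpow_add₀ (two_ne_zero), zpow_neg_one]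
  rw [tsum_congr this, tsum_mul_right]
  ring

lemma weight_empty : weight (∅ : Set (List Bool)) = 0 := by
  unfold weight
  exact tsum_empty

lemma weight_singleton_nil : weight ({[]} : Set (List Bool)) = 1 := by
  have h1 := tsum_singleton ([] : List Bool) (fun y : List Bool => (2:ℝ) ^ (-(y.length : ℤ)))
  unfold weight
  rw [h1]
  norm_num

lemma weight_split {H : Set (List Bool)} (hfin : H.Finite) :
    weight H = weight (H ∩ {[]}) + weight {x | false :: x ∈ H} / 2
      + weight {x | true :: x ∈ H} / 2 := by
  set H0 : Set (List Bool) := {x | false :: x ∈ H} with hH0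
  set H1 : Set (List Bool) := {x | true :: x ∈ H} with hH1
  have hfin0 : H0.Finite := by
    have : H0 ⊆ (fun t => false :: t) ⁻¹' H := fun t ht => ht
    exact (hfin.preimage (fun x _ y _ h => by simpa using h)).subset this
  have hfin1 : H1.Finite := by
    have : H1 ⊆ (fun t => true :: t) ⁻¹' H := fun t ht => ht
    exact (hfin.preimage (fun x _ y _ h => by simpa using h)).subset this
  have hsplit : H = (H ∩ {[]}) ∪ (((false :: ·) '' H0) ∪ ((true :: ·) '' H1)) := by
    ext x
    cases x with
    | nil => simp
    | cons b t =>
      cases b <;> simp [hH0, hH1]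
  have hd1 : Disjoint (((false :: ·) '' H0)) ((true :: ·) '' H1) := by
    rw [Set.disjoint_left]
    rintro x ⟨t, _, rfl⟩ ⟨t', _, h⟩
    simp at h
  have hd2 : Disjoint (H ∩ {[]}) (((false :: ·) '' H0) ∪ ((true :: ·) '' H1)) := by
    rw [Set.disjoint_left]
    rintro x ⟨_, hx2⟩ hx'
    rcases hx' with ⟨t, _, rfl⟩ | ⟨t, _, rfl⟩ <;> simp at hx2
  calc weight H = weight ((H ∩ {[]}) ∪ (((false :: ·) '' H0) ∪ ((true :: ·) '' H1))) := by
        rw [← hsplit]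
    _ = weight (H ∩ {[]}) + (weight ((false :: ·) '' H0) + weight ((true :: ·) '' H1)) := by
        rw [weight_union (hfin.inter_of_left _) ((hfin0.image _).union (hfin1.image _)) hd2,
          weight_union (hfin0.image _) (hfin1.image _) hd1]
    _ = weight (H ∩ {[]}) + weight H0 / 2 + weight H1 / 2 := by
        rw [weight_cons, weight_cons]; ring

lemma weight_inter_nil_mem {H : Set (List Bool)} (hr : [] ∈ H) :
    weight (H ∩ {[]}) = 1 := by
  have : H ∩ {[]} = {[]} := by
    ext x; simp only [Set.mem_inter_iff, Set.mem_singleton_iff]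
    exact ⟨fun h => h.2, fun h => ⟨h ▸ hr, h⟩⟩
  rw [this, weight_singleton_nil]

lemma weight_inter_nil_not_mem {H : Set (List Bool)} (hr : [] ∉ H) :
    weight (H ∩ {[]}) = 0 := by
  have : H ∩ {[]} = ∅ := by
    ext x; simp only [Set.mem_inter_iff, Set.mem_singleton_iff, Set.mem_empty_iff_false,
      iff_false, not_and]
    rintro hx rfl; exact hr hx
  rw [this, weight_empty]



/-! ### Basic sigs facts -/

lemma empty_mem_sigs (H : Set (List Bool)) : ∅ ∈ sigs H := by
  refine ⟨0, id, ⟨?_, ?_⟩, ?_, ?_⟩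
  · intro x y hx; exact absurd hx (Nat.not_lt_zero _)
  · intro x hx; omega
  · intro x hx; exact absurd hx (Nat.not_lt_zero _)
  · ext l; simp

lemma sigs_subset {n : ℕ} {H : Set (List Bool)} (hH : H ⊆ treeVerts n) :
    sigs H ⊆ {σ : Set ℕ | σ ⊆ Set.Iio n} := by
  rintro σ ⟨d, f, _, hmem, rfl⟩ l hl
  obtain ⟨x, hx, rfl⟩ := hl
  exact hH (hmem x hx)

lemma sigs_finite {n : ℕ} {H : Set (List Bool)} (hH : H ⊆ treeVerts n) :
    (sigs H).Finite :=
  ((Set.finite_Iio n).finite_subsets).subset (sigs_subset hH)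

/-! ### Level function -/

def L (f : List Bool → List Bool) (k : ℕ) : ℕ := (f (List.replicate k false)).length

lemma lev_eq {d : ℕ} {f : List Bool → List Bool} (h : IsRegEmb d f) {x : List Bool}
    (hx : x.length < d) : (f x).length = L f x.length :=
  h.1 x (List.replicate x.length false) hx (by simpa using hx) (by simp)

lemma lev_succ {d : ℕ} {f : List Bool → List Bool} (h : IsRegEmb d f) {k : ℕ}
    (hk : k + 1 < d) : L f k < L f (k + 1) := by
  obtain ⟨c, hc, -⟩ := h.2 (List.replicate k false) (by simpa using hk)
  rw [← List.replicate_succ'] at hc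
  have := hc.length_le
  simp only [List.length_append, List.length_singleton] at this
  unfold L
  omega

lemma lev_mono {d : ℕ} {f : List Bool → List Bool} (h : IsRegEmb d f) :
    ∀ ⦃j k : ℕ⦄, j < k → k < d → L f j < L f k := by
  intro j k
  induction k with
  | zero => omega
  | succ k ih =>
    intro hjk hkd
    rcases Nat.lt_succ_iff_lt_or_eq.1 hjk with h' | h'
    · exact (ih h' (by omega)).trans (lev_succ h hkd)
    · subst h'; exact lev_succ h hkd

lemma sig_eq_image {d : ℕ} {f : List Bool → List Bool} (h : IsRegEmb d f) :
    {l : ℕ | ∃ x : List Bool, x.length < d ∧ (f x).length = l} = L f '' Set.Iio d := by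
  ext l
  constructor
  · rintro ⟨x, hx, rfl⟩; exact ⟨x.length, hx, (lev_eq h hx).symm⟩
  · rintro ⟨k, hk, rfl⟩
    exact ⟨List.replicate k false, by simpa using hk, by simp [L]⟩

lemma enum_card {L0 : ℕ → ℕ} {d : ℕ}
    (m0 : ∀ ⦃j k : ℕ⦄, j < k → k < d → L0 j < L0 k) :
    (L0 '' Set.Iio d).ncard = d := by
  have hinj : Set.InjOn L0 (Set.Iio d) := by
    intro a ha b hb hab
    by_contra h
    rcases lt_or_gt_of_ne h with h' | h'
    · exact absurd hab (m0 h' hb).ne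
    · exact absurd hab.symm (m0 h' ha).ne
  rw [Set.ncard_image_of_injOn hinj, ← Finset.coe_Iio, Set.ncard_coe_finset, Nat.card_Iio]

lemma enum_unique {L0 L1 : ℕ → ℕ} {d : ℕ}
    (m0 : ∀ ⦃j k : ℕ⦄, j < k → k < d → L0 j < L0 k)
    (m1 : ∀ ⦃j k : ℕ⦄, j < k → k < d → L1 j < L1 k)
    (him : L0 '' Set.Iio d = L1 '' Set.Iio d) :
    ∀ k, k < d → L0 k = L1 k := by
  intro k
  induction k using Nat.strong_induction_on with
  | _ k ih =>
    intro hk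
    have h0 : L0 k ∈ L1 '' Set.Iio d := him ▸ ⟨k, hk, rfl⟩
    obtain ⟨j, hj, hj'⟩ := h0
    rcases lt_trichotomy j k with h | h | h
    · have h1 : L0 j < L0 k := m0 h hk
      have h2 : L0 j = L1 j := ih j h (h.trans hk)
      have h3 : L1 j < L1 k ∨ L1 j = L1 k ∨ L1 k < L1 j := by
        rcases lt_trichotomy (L1 j) (L1 k) with h' | h' | h' <;> tauto
      omega
    · subst h; omega
    · have h1 : L1 k < L1 j := m1 h hj
      have h2 : L1 k ∈ L0 '' Set.Iio d := him.symm ▸ ⟨k, hk, rfl⟩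
      obtain ⟨m, hm, hm'⟩ := h2
      have hmk : m < k := by
        rcases lt_trichotomy m k with h' | h' | h'
        · exact h'
        · subst h'; omega
        · have h5 := m0 h' hm
          omega
      have h3 : L0 m = L1 m := ih m hmk (hmk.trans hk)
      have h4 : L1 m < L1 k := m1 hmk hk
      omega

/-! ### Shift -/

lemma shift_mem {H : Set (List Bool)} {b : Bool} {σ : Set ℕ}
    (hσ : σ ∈ sigs {x | b :: x ∈ H}) : (· + 1) '' σ ∈ sigs H := by
  obtain ⟨d, f, ⟨h1, h2⟩, hmem, rfl⟩ := hσ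
  refine ⟨d, fun x => b :: f x, ⟨?_, ?_⟩, ?_, ?_⟩
  · intro x y hx hy hxy
    simp [h1 x y hx hy hxy]
  · intro x hx
    obtain ⟨c, hc1, hc2⟩ := h2 x hx
    exact ⟨c, by simpa [List.cons_prefix_cons] using hc1,
      by simpa [List.cons_prefix_cons] using hc2⟩
  · intro x hx; exact hmem x hx
  · ext l
    simp only [Set.mem_image, Set.mem_setOf_eq, List.length_cons]
    constructor
    · rintro ⟨l', ⟨x, hx, rfl⟩, rfl⟩; exact ⟨x, hx, rfl⟩
    · rintro ⟨x, hx, rfl⟩; exact ⟨(f x).length, ⟨x, hx, rfl⟩, rfl⟩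

/-! ### Merge -/

def mergeF (f0 f1 : List Bool → List Bool) : List Bool → List Bool
  | [] => []
  | (false :: t) => false :: f0 t
  | (true :: t) => true :: f1 t

@[simp] lemma mergeF_nil (f0 f1 : List Bool → List Bool) : mergeF f0 f1 [] = [] := rfl
@[simp] lemma mergeF_false (f0 f1 : List Bool → List Bool) (t : List Bool) :
    mergeF f0 f1 (false :: t) = false :: f0 t := rfl
@[simp] lemma mergeF_true (f0 f1 : List Bool → List Bool) (t : List Bool) :
    mergeF f0 f1 (true :: t) = true :: f1 t := rfl

lemma merge_mem {H : Set (List Bool)} (hroot : [] ∈ H) {σ : Set ℕ}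
    (h0 : σ ∈ sigs {x | false :: x ∈ H}) (h1 : σ ∈ sigs {x | true :: x ∈ H}) :
    insert 0 ((· + 1) '' σ) ∈ sigs H := by
  obtain ⟨d0, f0, hr0, hm0, rfl⟩ := h0
  obtain ⟨d1, f1, hr1, hm1, hσ1⟩ := h1
  have him : L f0 '' Set.Iio d0 = L f1 '' Set.Iio d1 := by
    rw [← sig_eq_image hr0, ← sig_eq_image hr1, ← hσ1]
  have hd : d0 = d1 := by
    have c0 := enum_card (lev_mono hr0)
    have c1 := enum_card (lev_mono hr1)
    rw [← c0, ← c1, him]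
  subst hd
  have hL : ∀ k, k < d0 → L f0 k = L f1 k := enum_unique (lev_mono hr0) (lev_mono hr1) him
  have hlen : ∀ (b : Bool) (t : List Bool), t.length < d0 →
      (mergeF f0 f1 (b :: t)).length = L f0 t.length + 1 := by
    intro b t ht
    cases b
    · simp only [mergeF_false, List.length_cons, lev_eq hr0 ht]
    · simp only [mergeF_true, List.length_cons, lev_eq hr1 ht, ← hL t.length ht]
  refine ⟨d0 + 1, mergeF f0 f1, ⟨?_, ?_⟩, ?_, ?_⟩
  · intro x y hx hy hxy
    cases x with
    | nil =>
      cases y with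
      | nil => rfl
      | cons b t => simp at hxy
    | cons b t =>
      cases y with
      | nil => simp at hxy
      | cons b' t' =>
        simp only [List.length_cons] at hx hy hxy
        have htt : t.length = t'.length := by omega
        rw [hlen b t (by omega), hlen b' t' (by omega), htt]
  · intro x hx
    cases x with
    | nil =>
      refine ⟨false, ?_, ?_⟩ <;> simp [List.cons_prefix_cons]
    | cons b t =>
      simp only [List.length_cons] at hx
      cases b
      · obtain ⟨c, hc1, hc2⟩ := hr0.2 t (by omega)
        exact ⟨c, by simpa [List.cons_prefix_cons] using hc1,
          by simpa [List.cons_prefix_cons] using hc2⟩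
      · obtain ⟨c, hc1, hc2⟩ := hr1.2 t (by omega)
        exact ⟨c, by simpa [List.cons_prefix_cons] using hc1,
          by simpa [List.cons_prefix_cons] using hc2⟩
  · intro x hx
    cases x with
    | nil => exact hroot
    | cons b t =>
      simp only [List.length_cons] at hx
      cases b
      · exact hm0 t (by omega)
      · exact hm1 t (by omega)
  · ext l
    simp only [Set.mem_insert_iff, Set.mem_image, Set.mem_setOf_eq]
    constructor
    · rintro (rfl | ⟨l', ⟨x, hx, rfl⟩, rfl⟩)
      · exact ⟨[], by simp, rfl⟩
      · exact ⟨false :: x, by simpa using hx, by simp⟩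
    · rintro ⟨x, hx, rfl⟩
      cases x with
      | nil => left; rfl
      | cons b t =>
        right
        simp only [List.length_cons] at hx
        have ht : t.length < d0 := by omega
        cases b
        · exact ⟨(f0 t).length, ⟨t, ht, rfl⟩, by simp⟩
        · refine ⟨(f1 t).length, ?_, by simp⟩
          have hmem : (f1 t).length ∈ {l : ℕ | ∃ x : List Bool, x.length < d0 ∧ (f1 x).length = l} :=
            ⟨t, ht, rfl⟩
          rw [← hσ1] at hmem
          exact hmem


end Stmt3Aux

/-- Signature-counting lemma: `|S(H)| ≥ 2^(w(H))`. -/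
theorem stmt3 (n : ℕ) (H : Set (List Bool)) (hH : H ⊆ treeVerts n) :
    (2 : ℝ) ^ weight H ≤ ((sigs H).ncard : ℝ) := by
  induction n generalizing H with
  | zero =>
    have hempty : H = ∅ := by
      ext x
      exact iff_of_false (fun hx => Nat.not_lt_zero _ (hH hx)) (by simp)
    subst hempty
    rw [Stmt3Aux.weight_empty, Real.rpow_zero]
    have hfin := Stmt3Aux.sigs_finite (n := 0) (Set.empty_subset _)
    have hpos := (Set.ncard_pos hfin).2 ⟨∅, Stmt3Aux.empty_mem_sigs ∅⟩
    exact_mod_cast hpos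
  | succ n ih =>
    set H0 : Set (List Bool) := {x | false :: x ∈ H} with hH0def
    set H1 : Set (List Bool) := {x | true :: x ∈ H} with hH1def
    have hH0 : H0 ⊆ treeVerts n := by
      intro t ht
      have h' : (false :: t).length < n + 1 := hH ht
      simp only [List.length_cons] at h'
      exact Nat.lt_of_succ_lt_succ h'
    have hH1 : H1 ⊆ treeVerts n := by
      intro t ht
      have h' : (true :: t).length < n + 1 := hH ht
      simp only [List.length_cons] at h'
      exact Nat.lt_of_succ_lt_succ h'
    have hfin : H.Finite := (List.finite_length_lt Bool (n + 1)).subset hH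
    have ihs0 := ih H0 hH0
    have ihs1 := ih H1 hH1
    have finA : (sigs H0).Finite := Stmt3Aux.sigs_finite hH0
    have finB : (sigs H1).Finite := Stmt3Aux.sigs_finite hH1
    have finS : (sigs H).Finite := Stmt3Aux.sigs_finite hH
    set A := sigs H0 with hA
    set B := sigs H1 with hB
    have hinc : Function.Injective (fun l : ℕ => l + 1) := fun p q h => by simpa using h
    have hs_inj : Function.Injective (Set.image (· + 1) : Set ℕ → Set ℕ) :=
      Set.image_injective.2 hinc
    have hzero : ∀ σ : Set ℕ, (0 : ℕ) ∉ (· + 1) '' σ := by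
      intro σ
      rintro ⟨m, -, h⟩
      simp at h
    have hsub : Set.image (· + 1) '' (A ∪ B) ⊆ sigs H := by
      rintro τ ⟨σ, hσ, rfl⟩
      rcases hσ with h | h
      · exact Stmt3Aux.shift_mem (b := false) h
      · exact Stmt3Aux.shift_mem (b := true) h
    have cardAB : (Set.image (· + 1) '' (A ∪ B)).ncard = (A ∪ B).ncard :=
      Set.ncard_image_of_injOn hs_inj.injOn
    have incl_excl := Set.ncard_union_add_ncard_inter A B finA finB
    set a : ℝ := (A.ncard : ℝ) with ha
    set b : ℝ := (B.ncard : ℝ) with hb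
    have ha0 : (0:ℝ) ≤ a := Nat.cast_nonneg _
    have hb0 : (0:ℝ) ≤ b := Nat.cast_nonneg _
    have key0 : (2:ℝ) ^ (weight H0 / 2) ≤ Real.sqrt a := by
      have hrw : weight H0 / 2 = weight H0 * (1/2) := by ring
      rw [hrw, Real.rpow_mul (by norm_num : (0:ℝ) ≤ 2), ← Real.sqrt_eq_rpow]
      exact Real.sqrt_le_sqrt ihs0
    have key1 : (2:ℝ) ^ (weight H1 / 2) ≤ Real.sqrt b := by
      have hrw : weight H1 / 2 = weight H1 * (1/2) := by ring
      rw [hrw, Real.rpow_mul (by norm_num : (0:ℝ) ≤ 2), ← Real.sqrt_eq_rpow]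
      exact Real.sqrt_le_sqrt ihs1
    have hw := Stmt3Aux.weight_split hfin
    by_cases hr : [] ∈ H
    · have hsubC : (fun σ : Set ℕ => insert 0 ((· + 1) '' σ)) '' (A ∩ B) ⊆ sigs H := by
        rintro τ ⟨σ, ⟨h0, h1⟩, rfl⟩
        exact Stmt3Aux.merge_mem hr h0 h1
      have hdisj : Disjoint (Set.image (· + 1) '' (A ∪ B))
          ((fun σ : Set ℕ => insert 0 ((· + 1) '' σ)) '' (A ∩ B)) := by
        rw [Set.disjoint_left]
        rintro τ ⟨σ, -, rfl⟩ ⟨σ', -, hτ⟩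
        apply hzero σ
        rw [← hτ]
        exact Set.mem_insert 0 _
      have hinjC : Set.InjOn (fun σ : Set ℕ => insert 0 ((· + 1) '' σ)) (A ∩ B) := by
        intro σ1 _ σ2 _ h
        apply hs_inj
        have e1 : (· + 1) '' σ1 = insert 0 ((· + 1) '' σ1) \ {0} :=
          (Set.insert_diff_self_of_notMem (hzero σ1)).symm
        rw [e1]
        simp only at h
        rw [h, Set.insert_diff_self_of_notMem (hzero σ2)]
      have cardC := Set.ncard_image_of_injOn hinjC
      have hunion : (Set.image (· + 1) '' (A ∪ B) ∪
          (fun σ : Set ℕ => insert 0 ((· + 1) '' σ)) '' (A ∩ B)).ncard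
          = (A ∪ B).ncard + (A ∩ B).ncard := by
        rw [Set.ncard_union_eq hdisj ((finA.union finB).image _)
          ((finA.inter_of_left _).image _), cardAB, cardC]
      have hle : A.ncard + B.ncard ≤ (sigs H).ncard := by
        rw [← incl_excl, ← hunion]
        exact Set.ncard_le_ncard (Set.union_subset hsub hsubC) finS
      rw [Stmt3Aux.weight_inter_nil_mem hr] at hw
      calc (2:ℝ) ^ weight H = 2 * ((2:ℝ) ^ (weight H0 / 2) * (2:ℝ) ^ (weight H1 / 2)) := by
            rw [hw, Real.rpow_add two_pos, Real.rpow_add two_pos, Real.rpow_one]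
            ring
        _ ≤ 2 * (Real.sqrt a * Real.sqrt b) := by
            have h1 : (0:ℝ) ≤ (2:ℝ) ^ (weight H1 / 2) := by positivity
            have h2 := mul_le_mul key0 key1 h1 (Real.sqrt_nonneg a)
            nlinarith
        _ ≤ a + b := by
            nlinarith [Real.sq_sqrt ha0, Real.sq_sqrt hb0,
              sq_nonneg (Real.sqrt a - Real.sqrt b)]
        _ ≤ ((sigs H).ncard : ℝ) := by rw [ha, hb]; exact_mod_cast hle
    · have hle : (A ∪ B).ncard ≤ (sigs H).ncard := by
        rw [← cardAB]
        exact Set.ncard_le_ncard hsub finS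
      have hA_le : A.ncard ≤ (A ∪ B).ncard :=
        Set.ncard_le_ncard Set.subset_union_left (finA.union finB)
      have hB_le : B.ncard ≤ (A ∪ B).ncard :=
        Set.ncard_le_ncard Set.subset_union_right (finA.union finB)
      rw [Stmt3Aux.weight_inter_nil_not_mem hr] at hw
      set u : ℝ := (((A ∪ B).ncard : ℕ) : ℝ) with hu
      have hau : a ≤ u := by rw [ha, hu]; exact_mod_cast hA_le
      have hbu : b ≤ u := by rw [hb, hu]; exact_mod_cast hB_le
      calc (2:ℝ) ^ weight H = (2:ℝ) ^ (weight H0 / 2) * (2:ℝ) ^ (weight H1 / 2) := by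
            rw [hw, show (0:ℝ) + weight H0 / 2 + weight H1 / 2
              = weight H0 / 2 + weight H1 / 2 by ring, Real.rpow_add two_pos]
        _ ≤ Real.sqrt a * Real.sqrt b :=
            mul_le_mul key0 key1 (by positivity) (Real.sqrt_nonneg a)
        _ ≤ Real.sqrt u * Real.sqrt u := by
            have h1 := Real.sqrt_le_sqrt hau
            have h2 := Real.sqrt_le_sqrt hbu
            exact mul_le_mul h1 h2 (Real.sqrt_nonneg b) (Real.sqrt_nonneg u)
        _ = u := Real.mul_self_sqrt (Nat.cast_nonneg _)
        _ ≤ ((sigs H).ncard : ℝ) := by rw [hu]; exact_mod_cast hle
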